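/- In a Heinlein wall of size 2r, no set of at most r edges meets every (a*–b*, c*–d*) linkage; that is, for every edge set U with |U| ≤ r, the graph W − U still contains a vertex-disjoint union of an a*–b* path and a c*–d* path. -/

import Mathlib

/-- Vertices of a Heinlein wall of size `r`: path vertices `u j i` (path `j`,
position `i`, both 0-based), bottleneck vertices `z t` (`t = 0, …, r`), and the
terminals `a`, `b`.  We write `c = z 0` and `d = z r`. -/
inductive HWVert (r : ℕ) where
  | u : Fin r → Fin (2 * r) → HWVert r
  | z : Fin (r + 1) → HWVert r
  | a : HWVert r
  | b : HWVert r
deriving DecidableEq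

/-- The defining relation of the Heinlein wall (paper 1-based indices translated
to 0-based ones): `u j i — u j (i+1)`; `z t — u j i` for `i` even iff `t = j`
and for `i` odd iff `t = j + 1`; `z t — z (t+1)`; `a — u j 0`; `b — u j (2r-1)`. -/
def HWRel (r : ℕ) : HWVert r → HWVert r → Prop := fun x y =>
  match x, y with
  | .u j i, .u j' i' => j = j' ∧ i'.val = i.val + 1
  | .z t, .u j i => (i.val % 2 = 0 ∧ t.val = j.val) ∨ (i.val % 2 = 1 ∧ t.val = j.val + 1)
  | .z t, .z t' => t'.val = t.val + 1
  | .a, .u _ i => i.val = 0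
  | .b, .u _ i => i.val = 2 * r - 1
  | _, _ => False

/-- The Heinlein wall of size `r`. -/
def HW (r : ℕ) : SimpleGraph (HWVert r) := SimpleGraph.fromRel (HWRel r)

namespace HWaux
variable {n : ℕ}

lemma hw_adj_iff {x y : HWVert n} :
    (HW n).Adj x y ↔ x ≠ y ∧ (HWRel n x y ∨ HWRel n y x) := by
  simp [HW, SimpleGraph.fromRel_adj]

lemma adj_uu {j : Fin n} {i i' : Fin (2*n)} (h : i'.val = i.val + 1) :
    (HW n).Adj (.u j i) (.u j i') := by
  rw [hw_adj_iff]
  exact ⟨by simp [Fin.ext_iff]; omega, Or.inl ⟨rfl, h⟩⟩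

lemma adj_au {j : Fin n} {i : Fin (2*n)} (h : i.val = 0) :
    (HW n).Adj .a (.u j i) := by
  rw [hw_adj_iff]
  exact ⟨by simp, Or.inl h⟩

lemma adj_ub {j : Fin n} {i : Fin (2*n)} (h : i.val = 2*n - 1) :
    (HW n).Adj (.u j i) .b := by
  rw [hw_adj_iff]
  exact ⟨by simp, Or.inr h⟩

def tailWalk (k : Fin n) : (m : ℕ) → (h : m < 2*n) → (HW n).Walk (.u k ⟨2*n-1-m, by omega⟩) .b
  | 0, _ => SimpleGraph.Walk.cons (adj_ub rfl) SimpleGraph.Walk.nil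
  | m+1, h => SimpleGraph.Walk.cons
      (adj_uu (by simp only [Fin.val_mk]; omega)) (tailWalk k m (by omega))

lemma support_tailWalk (k : Fin n) (m : ℕ) (h : m < 2*n) :
    ∀ x ∈ (tailWalk k m h).support, x = .b ∨ ∃ i : Fin (2*n), x = .u k i ∧ 2*n-1-m ≤ i.val := by
  induction m with
  | zero =>
    intro x hx
    simp [tailWalk] at hx
    rcases hx with hx | hx
    · exact Or.inr ⟨_, hx, le_refl _⟩
    · exact Or.inl hx
  | succ m ih =>
    intro x hx
    simp only [tailWalk, SimpleGraph.Walk.support_cons, List.mem_cons] at hx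
    rcases hx with hx | hx
    · exact Or.inr ⟨_, hx, by simp only [Fin.val_mk]; omega⟩
    · rcases ih (by omega) x hx with h1 | ⟨i, h2, h3⟩
      · exact Or.inl h1
      · exact Or.inr ⟨i, h2, by omega⟩

lemma isPath_tailWalk (k : Fin n) (m : ℕ) (h : m < 2*n) :
    (tailWalk k m h).IsPath := by
  induction m with
  | zero =>
    simp [tailWalk]
  | succ m ih =>
    simp only [tailWalk, SimpleGraph.Walk.cons_isPath_iff]
    refine ⟨ih (by omega), fun hx => ?_⟩
    rcases support_tailWalk k m (by omega) _ hx with h1 | ⟨i, h2, h3⟩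
    · exact absurd h1 (by simp)
    · rw [HWVert.u.injEq] at h2
      have := h2.2
      rw [Fin.ext_iff] at this
      simp at this
      omega

lemma edges_tailWalk {U : Finset (Sym2 (HWVert n))} (k : Fin n)
    (hpath : ∀ i i' : Fin (2*n), i'.val = i.val + 1 → s(HWVert.u k i, HWVert.u k i') ∉ U)
    (hb : ∀ i : Fin (2*n), i.val = 2*n-1 → s(HWVert.u k i, HWVert.b) ∉ U)
    (m : ℕ) (h : m < 2*n) :
    ∀ e ∈ (tailWalk k m h).edges, e ∉ U := by
  induction m with
  | zero =>
    intro e he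
    simp [tailWalk] at he
    subst he
    exact hb _ rfl
  | succ m ih =>
    intro e he
    simp only [tailWalk, SimpleGraph.Walk.edges_cons, List.mem_cons] at he
    rcases he with he | he
    · subst he
      exact hpath _ _ (by simp only [Fin.val_mk]; omega)
    · exact ih (by omega) e he

def pWalk (hn : 0 < n) (k : Fin n) : (HW n).Walk .a .b :=
  SimpleGraph.Walk.cons (v := HWVert.u k ⟨0, by omega⟩) (adj_au rfl)
    ((tailWalk k (2*n-1) (by omega)).copy (by congr 1; exact Fin.ext (by simp only [Fin.val_mk]; omega)) rfl)

lemma support_pWalk (hn : 0 < n) (k : Fin n) :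
    ∀ x ∈ (pWalk hn k).support, x = .a ∨ x = .b ∨ ∃ i : Fin (2*n), x = .u k i := by
  intro x hx
  simp only [pWalk, SimpleGraph.Walk.support_cons, SimpleGraph.Walk.support_copy,
    List.mem_cons] at hx
  rcases hx with hx | hx
  · exact Or.inl hx
  · rcases support_tailWalk k _ _ x hx with h1 | ⟨i, h2, _⟩
    · exact Or.inr (Or.inl h1)
    · exact Or.inr (Or.inr ⟨i, h2⟩)

lemma isPath_pWalk (hn : 0 < n) (k : Fin n) : (pWalk hn k).IsPath := by
  simp only [pWalk, SimpleGraph.Walk.cons_isPath_iff, SimpleGraph.Walk.isPath_copy,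
    SimpleGraph.Walk.support_copy]
  refine ⟨isPath_tailWalk k _ _, fun hx => ?_⟩
  rcases support_tailWalk k _ _ _ hx with h1 | ⟨i, h2, _⟩ <;> simp_all

lemma edges_pWalk {U : Finset (Sym2 (HWVert n))} (hn : 0 < n) (k : Fin n)
    (ha : ∀ i : Fin (2*n), i.val = 0 → s(HWVert.a, HWVert.u k i) ∉ U)
    (hpath : ∀ i i' : Fin (2*n), i'.val = i.val + 1 → s(HWVert.u k i, HWVert.u k i') ∉ U)
    (hb : ∀ i : Fin (2*n), i.val = 2*n-1 → s(HWVert.u k i, HWVert.b) ∉ U) :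
    ∀ e ∈ (pWalk hn k).edges, e ∉ U := by
  intro e he
  simp only [pWalk, SimpleGraph.Walk.edges_cons, SimpleGraph.Walk.edges_copy,
    List.mem_cons] at he
  rcases he with he | he
  · subst he
    exact ha _ rfl
  · exact edges_tailWalk k hpath hb _ _ e he

lemma adj_zz {t t' : Fin (n+1)} (h : t'.val = t.val + 1) :
    (HW n).Adj (.z t) (.z t') := by
  rw [hw_adj_iff]
  exact ⟨by simp [Fin.ext_iff]; omega, Or.inl h⟩

lemma adj_zu {t : Fin (n+1)} {j : Fin n} {i : Fin (2*n)}
    (h : (i.val % 2 = 0 ∧ t.val = j.val) ∨ (i.val % 2 = 1 ∧ t.val = j.val + 1)) :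
    (HW n).Adj (.z t) (.u j i) := by
  rw [hw_adj_iff]
  exact ⟨by simp, Or.inl h⟩

def GoodOpt (U : Finset (Sym2 (HWVert n))) (j : ℕ) (hj : j < n) : Option (Fin n) → Prop
  | none => s(HWVert.z ⟨j, by omega⟩, HWVert.z ⟨j+1, by omega⟩) ∉ U
  | some i => s(HWVert.z ⟨j, by omega⟩, HWVert.u ⟨j, hj⟩ ⟨2*i.val, by have := i.isLt; omega⟩) ∉ U ∧
      s(HWVert.u ⟨j, hj⟩ ⟨2*i.val, by have := i.isLt; omega⟩,
        HWVert.u ⟨j, hj⟩ ⟨2*i.val+1, by have := i.isLt; omega⟩) ∉ U ∧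
      s(HWVert.u ⟨j, hj⟩ ⟨2*i.val+1, by have := i.isLt; omega⟩, HWVert.z ⟨j+1, by omega⟩) ∉ U

def seg (o : Option (Fin n)) (j : ℕ) (hj : j < n) :
    (HW n).Walk (.z ⟨j, by omega⟩) (.z ⟨j+1, by omega⟩) :=
  match o with
  | none => SimpleGraph.Walk.cons (adj_zz (by simp only [Fin.val_mk])) SimpleGraph.Walk.nil
  | some i =>
    SimpleGraph.Walk.cons (v := .u ⟨j, hj⟩ ⟨2*i.val, by have := i.isLt; omega⟩)
      (adj_zu (Or.inl ⟨by simp only [Fin.val_mk]; omega, by simp only [Fin.val_mk]⟩))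
      (SimpleGraph.Walk.cons (v := .u ⟨j, hj⟩ ⟨2*i.val+1, by have := i.isLt; omega⟩)
        (adj_uu (by simp only [Fin.val_mk]))
        (SimpleGraph.Walk.cons
          ((adj_zu (t := ⟨j+1, by omega⟩)
            (Or.inr ⟨by simp only [Fin.val_mk]; omega, by simp only [Fin.val_mk]⟩)).symm)
          SimpleGraph.Walk.nil))

lemma support_seg (o : Option (Fin n)) (j : ℕ) (hj : j < n) :
    ∀ x ∈ (seg o j hj).support,
      x = HWVert.z ⟨j, by omega⟩ ∨ x = HWVert.z ⟨j+1, by omega⟩ ∨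
      ∃ i : Fin n, o = some i ∧
        (x = HWVert.u ⟨j, hj⟩ ⟨2*i.val, by have := i.isLt; omega⟩ ∨
         x = HWVert.u ⟨j, hj⟩ ⟨2*i.val+1, by have := i.isLt; omega⟩) := by
  cases o with
  | none => intro x hx; simp [seg] at hx; tauto
  | some i =>
    intro x hx
    simp [seg] at hx
    rcases hx with hx | hx | hx | hx
    · exact Or.inl hx
    · exact Or.inr (Or.inr ⟨i, rfl, Or.inl hx⟩)
    · exact Or.inr (Or.inr ⟨i, rfl, Or.inr hx⟩)
    · exact Or.inr (Or.inl hx)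

lemma edges_seg {U : Finset (Sym2 (HWVert n))} (o : Option (Fin n)) (j : ℕ) (hj : j < n)
    (hgood : GoodOpt U j hj o) :
    ∀ e ∈ (seg o j hj).edges, e ∉ U := by
  cases o with
  | none =>
    intro e he; simp [seg] at he; subst he; exact hgood
  | some i =>
    intro e he
    simp [seg] at he
    obtain ⟨h1, h2, h3⟩ := hgood
    rcases he with he | he | he <;> subst he <;> assumption

lemma nodup_support_seg (o : Option (Fin n)) (j : ℕ) (hj : j < n) :
    (seg o j hj).support.Nodup := by
  cases o with
  | none => simp [seg, Fin.ext_iff]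
  | some i => simp [seg, Fin.ext_iff]; try omega

def qWalk (c : Fin n → Option (Fin n)) :
    (m : ℕ) → (h : m ≤ n) → (HW n).Walk (.z ⟨n-m, by omega⟩) (.z (Fin.last n))
  | 0, _ => SimpleGraph.Walk.nil.copy
      (by congr 1 <;> exact Fin.ext (by simp only [Fin.val_last, Fin.val_mk]; omega)) rfl
  | m+1, h =>
    ((seg (c ⟨n-(m+1), by omega⟩) (n-(m+1)) (by omega)).copy rfl
      (by congr 1; exact Fin.ext (by simp only [Fin.val_mk]; omega))).append
      (qWalk c m (by omega))

lemma support_qWalk (c : Fin n → Option (Fin n)) (m : ℕ) (h : m ≤ n) :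
    ∀ x ∈ (qWalk c m h).support,
      (∃ s : Fin (n+1), x = .z s ∧ n-m ≤ s.val) ∨
      (∃ (j : Fin n) (i : Fin (2*n)), x = .u j i ∧ n-m ≤ j.val ∧ c j ≠ none) := by
  induction m with
  | zero =>
    intro x hx
    simp [qWalk] at hx
    exact Or.inl ⟨_, hx, by simp only [Fin.val_last]; omega⟩
  | succ m ih =>
    intro x hx
    simp only [qWalk, SimpleGraph.Walk.support_append, SimpleGraph.Walk.support_copy,
      List.mem_append] at hx
    rcases hx with hx | hx
    · rcases support_seg _ _ _ x hx with h1 | h1 | ⟨i, hoi, h1 | h1⟩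
      · exact Or.inl ⟨_, h1, by simp only [Fin.val_mk]; omega⟩
      · exact Or.inl ⟨_, h1, by simp only [Fin.val_mk]; omega⟩
      · exact Or.inr ⟨_, _, h1, by simp only [Fin.val_mk]; omega, by rw [hoi]; simp⟩
      · exact Or.inr ⟨_, _, h1, by simp only [Fin.val_mk]; omega, by rw [hoi]; simp⟩
    · rcases ih (by omega) x (List.mem_of_mem_tail hx) with ⟨s, h1, h2⟩ | ⟨j, i, h1, h2, h3⟩
      · exact Or.inl ⟨s, h1, by omega⟩
      · exact Or.inr ⟨j, i, h1, by omega, h3⟩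

lemma isPath_qWalk (c : Fin n → Option (Fin n)) (m : ℕ) (h : m ≤ n) :
    (qWalk c m h).IsPath := by
  induction m with
  | zero => simp [qWalk]
  | succ m ih =>
    rw [SimpleGraph.Walk.isPath_def]
    simp only [qWalk, SimpleGraph.Walk.support_append, SimpleGraph.Walk.support_copy]
    rw [List.nodup_append]
    have hihp := ih (by omega)
    refine ⟨nodup_support_seg _ _ _,
      ((SimpleGraph.Walk.isPath_def _).mp hihp).tail, ?_⟩
    intro x hx x' hx' hxx'
    rw [← hxx'] at hx'
    have hinv := support_qWalk c m (by omega)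
    have hxq := List.mem_of_mem_tail hx'
    rcases support_seg _ _ _ x hx with h1 | h1 | ⟨i, _, h1 | h1⟩
    · subst h1
      rcases hinv _ hxq with ⟨s, h2, h3⟩ | ⟨j, i2, h2, _, _⟩
      · rw [HWVert.z.injEq, Fin.ext_iff, Fin.val_mk] at h2
        omega
      · exact absurd h2 (by simp)
    · subst h1
      have hnd := (SimpleGraph.Walk.isPath_def _).mp hihp
      rw [SimpleGraph.Walk.support_eq_cons] at hnd
      have heq : (HWVert.z ⟨n-(m+1)+1, by omega⟩ : HWVert n) = HWVert.z ⟨n-m, by omega⟩ := by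
        congr 1; exact Fin.ext (by simp only [Fin.val_mk]; omega)
      rw [heq] at hx'
      exact (List.nodup_cons.mp hnd).1 hx'
    · subst h1
      rcases hinv _ hxq with ⟨s, h2, _⟩ | ⟨j, i2, h2, h3, _⟩
      · exact absurd h2 (by simp)
      · rw [HWVert.u.injEq] at h2
        have := h2.1
        rw [Fin.ext_iff, Fin.val_mk] at this
        omega
    · subst h1
      rcases hinv _ hxq with ⟨s, h2, _⟩ | ⟨j, i2, h2, h3, _⟩
      · exact absurd h2 (by simp)
      · rw [HWVert.u.injEq] at h2
        have := h2.1
        rw [Fin.ext_iff, Fin.val_mk] at this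
        omega

lemma edges_qWalk {U : Finset (Sym2 (HWVert n))} (c : Fin n → Option (Fin n))
    (hgood : ∀ j : Fin n, GoodOpt U j.val j.isLt (c j)) (m : ℕ) (h : m ≤ n) :
    ∀ e ∈ (qWalk c m h).edges, e ∉ U := by
  induction m with
  | zero => intro e he; simp [qWalk] at he
  | succ m ih =>
    intro e he
    simp only [qWalk, SimpleGraph.Walk.edges_append, SimpleGraph.Walk.edges_copy,
      List.mem_append] at he
    rcases he with he | he
    · exact edges_seg _ _ _ (hgood ⟨n-(m+1), by omega⟩) e he
    · exact ih (by omega) e he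

lemma exists_goodOpt {U : Finset (Sym2 (HWVert n))} (hU : U.card ≤ n) (j : ℕ) (hj : j < n) :
    ∃ o, GoodOpt U j hj o := by
  by_contra hc
  push_neg at hc
  classical
  set f : Option (Fin n) → Sym2 (HWVert n) := fun o =>
    match o with
    | none => s(HWVert.z ⟨j, by omega⟩, HWVert.z ⟨j+1, by omega⟩)
    | some i =>
      if s(HWVert.z ⟨j, by omega⟩, HWVert.u ⟨j, hj⟩ ⟨2*i.val, by have := i.isLt; omega⟩) ∈ U then
        s(HWVert.z ⟨j, by omega⟩, HWVert.u ⟨j, hj⟩ ⟨2*i.val, by have := i.isLt; omega⟩)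
      else if s(HWVert.u ⟨j, hj⟩ ⟨2*i.val, by have := i.isLt; omega⟩,
          HWVert.u ⟨j, hj⟩ ⟨2*i.val+1, by have := i.isLt; omega⟩) ∈ U then
        s(HWVert.u ⟨j, hj⟩ ⟨2*i.val, by have := i.isLt; omega⟩,
          HWVert.u ⟨j, hj⟩ ⟨2*i.val+1, by have := i.isLt; omega⟩)
      else
        s(HWVert.u ⟨j, hj⟩ ⟨2*i.val+1, by have := i.isLt; omega⟩,
          HWVert.z ⟨j+1, by omega⟩) with hf
  have hfU : ∀ o, f o ∈ U := by
    intro o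
    cases o with
    | none =>
      have := hc none
      simp only [GoodOpt] at this
      simpa [hf] using this
    | some i =>
      have := hc (some i)
      simp only [GoodOpt] at this
      simp only [hf]
      split_ifs with h1 h2
      · exact h1
      · exact h2
      · tauto
  have hinj : Function.Injective f := by
    intro o o' he
    have ho := hfU o
    match o, o' with
    | none, none => rfl
    | none, some i' =>
      exfalso
      simp only [hf] at he
      split_ifs at he <;>
        simp [Sym2.eq_iff, Fin.ext_iff] at he <;> omega
    | some i, none =>
      exfalso
      simp only [hf] at he
      split_ifs at he <;>
        simp [Sym2.eq_iff, Fin.ext_iff] at he <;> omega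
    | some i, some i' =>
      simp only [hf] at he
      have : i = i' := by
        split_ifs at he <;>
          simp [Sym2.eq_iff, Fin.ext_iff] at he <;> (exact Fin.ext (by omega))
      rw [this]
  have hcard : (Finset.univ : Finset (Option (Fin n))).card ≤ U.card :=
    Finset.card_le_card_of_injOn f (fun o _ => hfU o) (hinj.injOn)
  simp [Finset.card_univ] at hcard
  omega

def GoodK (U : Finset (Sym2 (HWVert n))) (k : Fin n) : Prop :=
  (∀ i : Fin (2*n), i.val = 0 → s(HWVert.a, HWVert.u k i) ∉ U) ∧
  (∀ i i' : Fin (2*n), i'.val = i.val + 1 → s(HWVert.u k i, HWVert.u k i') ∉ U) ∧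
  (∀ i : Fin (2*n), i.val = 2*n-1 → s(HWVert.u k i, HWVert.b) ∉ U) ∧
  s(HWVert.z ⟨k.val, by have := k.isLt; omega⟩,
    HWVert.z ⟨k.val+1, by have := k.isLt; omega⟩) ∉ U

/-- whether an edge "belongs to" index `k` -/
def InK (U : Finset (Sym2 (HWVert n))) (k : Fin n) (e : Sym2 (HWVert n)) : Prop :=
  (∃ i : Fin (2*n), e = s(HWVert.a, HWVert.u k i)) ∨
  (∃ i i' : Fin (2*n), e = s(HWVert.u k i, HWVert.u k i')) ∨
  (∃ i : Fin (2*n), e = s(HWVert.u k i, HWVert.b)) ∨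
  e = s(HWVert.z ⟨k.val, by have := k.isLt; omega⟩,
        HWVert.z ⟨k.val+1, by have := k.isLt; omega⟩)

lemma inK_unique {U : Finset (Sym2 (HWVert n))} {k k' : Fin n} {e : Sym2 (HWVert n)}
    (h : InK U k e) (h' : InK U k' e) : k = k' := by
  rcases h with ⟨i, rfl⟩ | ⟨i, i', rfl⟩ | ⟨i, rfl⟩ | rfl <;>
    rcases h' with ⟨i2, he⟩ | ⟨i2, i2', he⟩ | ⟨i2, he⟩ | he <;>
      simp [Sym2.eq_iff, Fin.ext_iff] at he <;> first
        | (exact Fin.ext (by omega))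
        | omega
        | tauto

lemma exists_goodK {U : Finset (Sym2 (HWVert n))} (hU : U.card < n) :
    ∃ k : Fin n, GoodK U k := by
  by_contra hc
  push_neg at hc
  classical
  have hbad : ∀ k : Fin n, ∃ e, e ∈ U ∧ InK U k e := by
    intro k
    have hng := hc k
    rw [GoodK] at hng
    by_cases hA : ∀ i : Fin (2*n), i.val = 0 → s(HWVert.a, HWVert.u k i) ∉ U
    · by_cases hB : ∀ i i' : Fin (2*n), i'.val = i.val + 1 → s(HWVert.u k i, HWVert.u k i') ∉ U
      · by_cases hC : ∀ i : Fin (2*n), i.val = 2*n-1 → s(HWVert.u k i, HWVert.b) ∉ U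
        · refine ⟨_, ?_, Or.inr (Or.inr (Or.inr rfl))⟩
          by_contra hD
          exact hng ⟨hA, hB, hC, hD⟩
        · push_neg at hC
          obtain ⟨i, _, hi⟩ := hC
          exact ⟨_, hi, Or.inr (Or.inr (Or.inl ⟨i, rfl⟩))⟩
      · push_neg at hB
        obtain ⟨i, i', _, hi⟩ := hB
        exact ⟨_, hi, Or.inr (Or.inl ⟨i, i', rfl⟩)⟩
    · push_neg at hA
      obtain ⟨i, _, hi⟩ := hA
      exact ⟨_, hi, Or.inl ⟨i, rfl⟩⟩
  choose f hfU hfK using hbad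
  have hinj : Function.Injective f := by
    intro k k' he
    exact inK_unique (hfK k) (he ▸ hfK k')
  have hcard : (Finset.univ : Finset (Fin n)).card ≤ U.card :=
    Finset.card_le_card_of_injOn f (fun o _ => hfU o) (hinj.injOn)
  simp [Finset.card_univ] at hcard
  omega

theorem main (r : ℕ) (hr : 1 ≤ r)
    (U : Finset (Sym2 (HWVert (2 * r)))) (hU : U.card ≤ r) :
    ∃ (p : (HW (2*r)).Walk .a .b) (q : (HW (2*r)).Walk (.z 0) (.z (Fin.last (2*r)))),
      p.IsPath ∧ q.IsPath ∧ (∀ x, x ∈ p.support → x ∉ q.support) ∧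
      (∀ e ∈ p.edges, e ∉ U) ∧ (∀ e ∈ q.edges, e ∉ U) := by
  classical
  obtain ⟨k, hk⟩ := exists_goodK (U := U) (by omega)
  set c : Fin (2*r) → Option (Fin (2*r)) := fun j =>
    if j = k then none else (exists_goodOpt (U := U) (by omega) j.val j.isLt).choose with hc
  have hgood : ∀ j : Fin (2*r), GoodOpt U j.val j.isLt (c j) := by
    intro j
    by_cases hj : j = k
    · subst hj
      simp only [hc, if_pos rfl, GoodOpt]
      exact hk.2.2.2
    · simp only [hc, if_neg hj]
      exact (exists_goodOpt (U := U) (by omega) j.val j.isLt).choose_spec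
  have hck : c k = none := by simp [hc]
  refine ⟨pWalk (by omega) k,
    (qWalk c (2*r) (le_refl _)).copy
      (by congr 1 <;> exact Fin.ext (by simp only [Fin.val_mk, Fin.val_zero]; omega)) rfl,
    isPath_pWalk _ _, ?_, ?_, ?_, ?_⟩
  · rw [SimpleGraph.Walk.isPath_copy]
    exact isPath_qWalk _ _ _
  · intro x hxp hxq
    rw [SimpleGraph.Walk.support_copy] at hxq
    rcases support_qWalk c (2*r) (le_refl _) x hxq with ⟨s, h1, _⟩ | ⟨j, i, h1, _, h3⟩
    · rcases support_pWalk (by omega) k x hxp with h2 | h2 | ⟨i, h2⟩ <;>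
        (subst h1; simp_all)
    · rcases support_pWalk (by omega) k x hxp with h2 | h2 | ⟨i2, h2⟩
      · subst h1; simp_all
      · subst h1; simp_all
      · subst h1
        rw [HWVert.u.injEq] at h2
        rw [← h2.1] at hck
        exact h3 hck
  · exact edges_pWalk _ _ hk.1 hk.2.1 hk.2.2.1
  · intro e he
    rw [SimpleGraph.Walk.edges_copy] at he
    exact edges_qWalk c hgood _ _ e he

end HWaux

/-- An (`a*`–`b*`, `c*`–`d*`) linkage in the Heinlein wall of size `r`:
a vertex-disjoint union of an `a*`–`b*` path and a `c*`–`d*` path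
(recall `c* = z 0` and `d* = z r`). -/
structure HWLinkage (r : ℕ) where
  p : (HW r).Walk .a .b
  q : (HW r).Walk (.z 0) (.z (Fin.last r))
  hp : p.IsPath
  hq : q.IsPath
  disj : ∀ x, x ∈ p.support → x ∉ q.support

/-- In a Heinlein wall of size `2r` (with `r ≥ 1`), no set of at most `r` edges
meets every (`a*`–`b*`, `c*`–`d*`) linkage: for every edge set `U` with
`|U| ≤ r` there is a linkage avoiding all edges of `U`. -/
theorem heinleinWall_no_small_edge_hitting_set (r : ℕ) (hr : 1 ≤ r)
    (U : Finset (Sym2 (HWVert (2 * r)))) (hU : U.card ≤ r) :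
    ∃ L : HWLinkage (2 * r),
      (∀ e ∈ L.p.edges, e ∉ U) ∧ (∀ e ∈ L.q.edges, e ∉ U) := by
  obtain ⟨p, q, hp, hq, hdisj, hep, heq⟩ := HWaux.main r hr U hU
  exact ⟨⟨p, q, hp, hq, hdisj⟩, hep, heq⟩
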